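/- (Appendix Lemma A.2) Suppose G satisfies Assumption L and there exist K ∈ ℕ such that for all m₁,…,m_K ∈ P(Δ°) and all x,y ∈ Δ°, Σ_{j=1}^K (G(m₁)·G(m₂)⋯G(m_j))(x,y) > 0 (matrix products). Then for every x ∈ Δ°, P(∃ n ∈ ℕ : L^n(x) > 0) = 1. -/

import Mathlib

open MeasureTheory Filter Set
open scoped ENNReal NNReal

noncomputable section

/-- The probability simplex `P(Δ°)`, identified with the standard simplex in `ℝ^d`. -/
def PD (d : ℕ) : Set (Fin d → ℝ) := stdSimplex ℝ (Fin d)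

/-- ℓ¹ norm on `ℝ^d`. -/
def l1 {d : ℕ} (v : Fin d → ℝ) : ℝ := ∑ x, |v x|

/-- Transition probability kernels on `Δ°` (row-stochastic matrices). -/
def IsKernel {d : ℕ} (K : Matrix (Fin d) (Fin d) ℝ) : Prop :=
  ∀ x, (∀ y, 0 ≤ K x y) ∧ (∑ y, K x y) = 1

/-- Adjacency matrix: entries are 0 or 1. -/
def IsAdjacency {d : ℕ} (A : Matrix (Fin d) (Fin d) ℝ) : Prop :=
  ∀ x y, A x y = 0 ∨ A x y = 1

/-- Irreducible adjacency matrix: for each `x, y` some positive power has positive `(x,y)` entry. -/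
def IsIrreducibleAdj {d : ℕ} (A : Matrix (Fin d) (Fin d) ℝ) : Prop :=
  IsAdjacency A ∧ ∀ x y, ∃ k : ℕ, 0 < (A ^ (k + 1)) x y

/-- `A ∈ 𝒜`: `A` is an adjacency matrix and `A x y = 0` forces `G m x y = 0` on the simplex. -/
def MemA {d : ℕ} (G : (Fin d → ℝ) → Matrix (Fin d) (Fin d) ℝ)
    (A : Matrix (Fin d) (Fin d) ℝ) : Prop :=
  IsAdjacency A ∧ ∀ x y, A x y = 0 → ∀ m ∈ PD d, G m x y = 0

open Classical in
/-- Relative entropy `R(ν ‖ μ)` of probability vectors on a finite type, valued in `ℝ≥0∞`. -/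
def relEnt {S : Type*} [Fintype S] (ν μ : S → ℝ) : ℝ≥0∞ :=
  if ∀ s, μ s = 0 → ν s = 0 then ENNReal.ofReal (∑ s, ν s * Real.log (ν s / μ s)) else ⊤

/-- `η ∈ U(m)` together with the (unique) solution `M` of the equation (P3). -/
structure Admissible {d : ℕ} (A : Matrix (Fin d) (Fin d) ℝ)
    (G : (Fin d → ℝ) → Matrix (Fin d) (Fin d) ℝ) (m : Fin d → ℝ)
    (η : ℝ → Fin d → Fin d → ℝ) (M : ℝ → Fin d → ℝ) : Prop where
  meas : ∀ x y, Measurable fun s => η s x y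
  prob : ∀ s, 0 ≤ s → (∀ x y, 0 ≤ η s x y) ∧ (∑ x, ∑ y, η s x y) = 1
  p1 : ∀ x y, A x y = 0 → ∀ t, 0 ≤ t → (∫ s in (0:ℝ)..t, η s x y) = 0
  p2 : ∀ᵐ s ∂(volume.restrict (Ici (0:ℝ))), ∀ x, (∑ y, η s x y) = ∑ y, η s y x
  contM : Continuous M
  sol : ∀ t, 0 ≤ t → ∀ x,
    M t x = m x - (∫ s in (0:ℝ)..t, ∑ y, η s x y) + ∫ s in (0:ℝ)..t, M s x
  memM : ∀ t, 0 ≤ t → M t ∈ PD d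
  exT : ∃ T : ℝ → Fin d → Fin d → ℝ, Continuous T ∧
    (∀ s t, 0 ≤ s → 0 ≤ t → (∑ x, ∑ y, |T t x y - T s x y|) ≤ 2 * |t - s|) ∧
    ∀ t, 0 ≤ t →
      (∀ x y, 0 ≤ T t x y) ∧ (∀ x, (∑ y, T t x y) = M t x) ∧
      (∀ y, (∑ x, T t x y) = M t y) ∧ (∀ x y, A x y = 0 → T t x y = 0)

/-- The discounted relative-entropy cost of a control `η` with associated trajectory `M`. -/
def cost {d : ℕ} (G : (Fin d → ℝ) → Matrix (Fin d) (Fin d) ℝ)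
    (η : ℝ → Fin d → Fin d → ℝ) (M : ℝ → Fin d → ℝ) : ℝ≥0∞ :=
  ∫⁻ s in Ici (0:ℝ), ENNReal.ofReal (Real.exp (-s)) *
    relEnt (fun xy : Fin d × Fin d => η s xy.1 xy.2)
      (fun xy : Fin d × Fin d => (∑ y, η s xy.1 y) * G (M s) xy.1 xy.2)

/-- The rate function `I` associated with the adjacency matrix `A`. -/
def rateI {d : ℕ} (A : Matrix (Fin d) (Fin d) ℝ)
    (G : (Fin d → ℝ) → Matrix (Fin d) (Fin d) ℝ) (m : Fin d → ℝ) : ℝ≥0∞ :=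
  ⨅ (η : ℝ → Fin d → Fin d → ℝ) (M : ℝ → Fin d → ℝ) (_ : Admissible A G m η M),
    cost G η M

/-- Extended-real logarithm of an extended nonnegative real. -/
def elog (x : ℝ≥0∞) : EReal :=
  if x = 0 then ⊥ else if x = ⊤ then ⊤ else ((Real.log x.toReal : ℝ) : EReal)

/-- Assumption L (Lipschitz continuity), together with the standing requirement that
`G` maps the simplex into transition kernels. -/
def AssumptionL {d : ℕ} (G : (Fin d → ℝ) → Matrix (Fin d) (Fin d) ℝ) : Prop :=
  (∀ m ∈ PD d, IsKernel (G m)) ∧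
  ∃ LG : ℝ, 0 < LG ∧ ∀ m ∈ PD d, ∀ m' ∈ PD d,
    (∑ x, ∑ y, |G m x y - G m' x y|) ≤ LG * l1 (fun x => m x - m' x)

/-- The filtration `F_n = σ(X₀, …, X_n)`. -/
def chainFilt {d : ℕ} {Ω : Type*} (X : ℕ → Ω → Fin d) (n : ℕ) : MeasurableSpace Ω :=
  ⨆ i : Fin (n + 1), MeasurableSpace.comap (X i) ⊤

/-- The self-interacting Markov chain driven by `G`, started at `x₀`, together with its
empirical measures `L^{n+1} = (1/(n+1)) ∑_{i=0}^n δ_{X_i}` and the conditional-law property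
`P(X_{n+1} = y | F_n) = G(L^{n+1})(X_n, y)` (stated via set integrals over `F_n`-sets). -/
structure IsSelfInteractingChain {d : ℕ} {Ω : Type*} [MeasurableSpace Ω] (P : Measure Ω)
    (G : (Fin d → ℝ) → Matrix (Fin d) (Fin d) ℝ) (x₀ : Fin d)
    (X : ℕ → Ω → Fin d) (L : ℕ → Ω → Fin d → ℝ) : Prop where
  measX : ∀ n, Measurable (X n)
  init : ∀ ω, X 0 ω = x₀
  emp : ∀ n ω x, L (n + 1) ω x =
    (∑ i ∈ Finset.range (n + 1), if X i ω = x then (1:ℝ) else 0) / (n + 1)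
  cond : ∀ n y (s : Set Ω), MeasurableSet[chainFilt X n] s →
    (∫ ω in s, (if X (n + 1) ω = y then (1:ℝ) else 0) ∂P) =
      ∫ ω in s, G (L (n + 1) ω) (X n ω) y ∂P

section A2Aux
set_option linter.unusedSectionVars false

open MeasureTheory

variable {d : ℕ} [NeZero d] {Ω : Type*} [MeasurableSpace Ω]

/-- The vector of the first `n+1` states. -/
private def vecb (X : ℕ → Ω → Fin d) (n : ℕ) (ω : Ω) : Fin (n + 1) → Fin d :=
  fun i => X i ω

private lemma measurable_vecb {X : ℕ → Ω → Fin d} (hX : ∀ n, Measurable (X n)) (n : ℕ) :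
    Measurable (vecb X n) :=
  measurable_pi_lambda _ fun i => hX i

/-- Cylinder functions of the first `n+1` states. -/
private def Cyl (X : ℕ → Ω → Fin d) (n : ℕ) (h : Ω → ℝ) : Prop :=
  ∃ φ : (Fin (n + 1) → Fin d) → ℝ, ∀ ω, h ω = φ (vecb X n ω)

private lemma Cyl.meas {X : ℕ → Ω → Fin d} (hX : ∀ n, Measurable (X n)) {n : ℕ}
    {h : Ω → ℝ} (hh : Cyl X n h) : Measurable h := by
  obtain ⟨φ, hφ⟩ := hh
  have : h = φ ∘ vecb X n := funext hφ
  rw [this]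
  exact (measurable_of_countable φ).comp (measurable_vecb hX n)

private lemma Cyl.integrable {X : ℕ → Ω → Fin d} (hX : ∀ n, Measurable (X n)) {n : ℕ}
    {h : Ω → ℝ} (hh : Cyl X n h) (P : Measure Ω) [IsFiniteMeasure P] :
    Integrable h P := by
  obtain ⟨φ, hφ⟩ := hh
  have hne : (Finset.univ : Finset (Fin (n + 1) → Fin d)).Nonempty := Finset.univ_nonempty
  refine (integrable_const (Finset.univ.sup' hne fun v => |φ v|)).mono'
    ((Cyl.meas hX ⟨φ, hφ⟩).aestronglyMeasurable) (Filter.Eventually.of_forall fun ω => ?_)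
  rw [Real.norm_eq_abs, hφ ω]
  exact Finset.le_sup' (fun v => |φ v|) (Finset.mem_univ _)

private lemma Cyl.mono {X : ℕ → Ω → Fin d} {n m : ℕ} (hnm : n ≤ m) {h : Ω → ℝ}
    (hh : Cyl X n h) : Cyl X m h := by
  obtain ⟨φ, hφ⟩ := hh
  exact ⟨fun v => φ fun i => v ⟨i.1, by omega⟩, fun ω => hφ ω⟩

private lemma Cyl.const {X : ℕ → Ω → Fin d} (n : ℕ) (c : ℝ) : Cyl X n fun _ => c :=
  ⟨fun _ => c, fun _ => rfl⟩

private lemma Cyl.mul {X : ℕ → Ω → Fin d} {n : ℕ} {f g : Ω → ℝ}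
    (hf : Cyl X n f) (hg : Cyl X n g) : Cyl X n fun ω => f ω * g ω := by
  obtain ⟨φ, hφ⟩ := hf
  obtain ⟨ψ, hψ⟩ := hg
  exact ⟨fun v => φ v * ψ v, fun ω => by simp only []; rw [hφ ω, hψ ω]⟩

private lemma Cyl.indic {X : ℕ → Ω → Fin d} {n k : ℕ} (hk : k ≤ n) (y : Fin d) :
    Cyl X n fun ω => if X k ω = y then (1 : ℝ) else 0 :=
  ⟨fun v => if v ⟨k, by omega⟩ = y then (1 : ℝ) else 0, fun ω => rfl⟩

/-- The empirical measure of a state vector. -/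
private def empOf {d : ℕ} (n : ℕ) (v : Fin (n + 1) → Fin d) : Fin d → ℝ :=
  fun z => (∑ i, if v i = z then (1 : ℝ) else 0) / (n + 1)

private lemma empOf_mem (n : ℕ) (v : Fin (n + 1) → Fin d) : empOf n v ∈ PD d := by
  have hn : (0 : ℝ) < (n : ℝ) + 1 := by positivity
  refine ⟨fun z => ?_, ?_⟩
  · exact div_nonneg (Finset.sum_nonneg fun i _ => by positivity) hn.le
  · have : ∑ z, ∑ i, (if v i = z then (1 : ℝ) else 0) = (n : ℝ) + 1 := by
      rw [Finset.sum_comm]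
      simp
    simp only [empOf]
    rw [← Finset.sum_div, this, div_self hn.ne']

section Chain

variable {P : Measure Ω} {G : (Fin d → ℝ) → Matrix (Fin d) (Fin d) ℝ} {x₀ : Fin d}
  {X : ℕ → Ω → Fin d} {L : ℕ → Ω → Fin d → ℝ}

private lemma L_eq (hchain : IsSelfInteractingChain P G x₀ X L) (n : ℕ) (ω : Ω) :
    L (n + 1) ω = empOf n (vecb X n ω) := by
  funext z
  rw [hchain.emp n ω z]
  simp only [empOf]
  congr 1
  rw [← Fin.sum_univ_eq_sum_range (fun i => if X i ω = z then (1 : ℝ) else 0) (n + 1)]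
  rfl

private lemma L_mem (hchain : IsSelfInteractingChain P G x₀ X L) (n : ℕ) (ω : Ω) :
    L (n + 1) ω ∈ PD d := by
  rw [L_eq hchain]
  exact empOf_mem n _

private lemma cyl_of_L (hchain : IsSelfInteractingChain P G x₀ X L) (n : ℕ)
    (F : (Fin d → ℝ) → Fin d → ℝ) :
    Cyl X n fun ω => F (L (n + 1) ω) (X n ω) :=
  ⟨fun v => F (empOf n v) (v ⟨n, Nat.lt_succ_self n⟩),
    fun ω => by show F (L (n + 1) ω) (X n ω) = _; rw [L_eq hchain]; rfl⟩

end Chain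

private lemma measurableSet_chainFilt {X : ℕ → Ω → Fin d} {n k : ℕ} (hk : k ≤ n)
    (t : Set (Fin d)) : MeasurableSet[chainFilt X n] (X k ⁻¹' t) := by
  have h1 : MeasurableSet[MeasurableSpace.comap (X k) ⊤] (X k ⁻¹' t) := ⟨t, trivial, rfl⟩
  have h2 : MeasurableSpace.comap (X k) ⊤ ≤ chainFilt X n := by
    have := le_iSup (fun i : Fin (n + 1) => MeasurableSpace.comap (X (i : ℕ)) ⊤)
      (⟨k, by omega⟩ : Fin (n + 1))
    simpa [chainFilt] using this
  exact h2 _ h1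

private lemma chainFilt_le {X : ℕ → Ω → Fin d} (hX : ∀ n, Measurable (X n)) (n : ℕ) :
    chainFilt X n ≤ ‹MeasurableSpace Ω› := by
  refine iSup_le fun i => ?_
  rintro s ⟨t, -, rfl⟩
  exact hX i ((Set.to_countable t).measurableSet)

private lemma chainFilt_mono {X : ℕ → Ω → Fin d} {n m : ℕ} (hnm : n ≤ m) :
    chainFilt X n ≤ chainFilt X m :=
  iSup_le fun i => le_iSup_of_le (⟨i.1, by omega⟩ : Fin (m + 1)) le_rfl

private lemma isKernel_pow {d : ℕ} {A : Matrix (Fin d) (Fin d) ℝ} (hA : IsKernel A) :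
    ∀ k, IsKernel (A ^ k)
  | 0 => by
      intro z
      constructor
      · intro y
        rw [pow_zero, Matrix.one_apply]
        split <;> norm_num
      · simp [pow_zero, Matrix.one_apply]
  | (k + 1) => by
      have hk := isKernel_pow hA k
      intro z
      constructor
      · intro y
        rw [pow_succ, Matrix.mul_apply]
        exact Finset.sum_nonneg fun w _ => mul_nonneg ((hk z).1 w) ((hA w).1 y)
      · rw [pow_succ]
        simp only [Matrix.mul_apply]
        calc ∑ y, ∑ w, (A ^ k) z w * A w y
            = ∑ w, ∑ y, (A ^ k) z w * A w y := Finset.sum_comm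
          _ = ∑ w, (A ^ k) z w * ∑ y, A w y := by simp [Finset.mul_sum]
          _ = 1 := by
              simp only [fun w => (hA w).2, mul_one]
              exact (hk z).2

private lemma kernel_entry_nonneg {d : ℕ} {A : Matrix (Fin d) (Fin d) ℝ} (hA : IsKernel A)
    (z y : Fin d) : 0 ≤ A z y := (hA z).1 y

private lemma kernel_entry_le_one {d : ℕ} {A : Matrix (Fin d) (Fin d) ℝ} (hA : IsKernel A)
    (z y : Fin d) : A z y ≤ 1 := by
  rw [← (hA z).2]
  exact Finset.single_le_sum (fun w _ => (hA z).1 w) (Finset.mem_univ y)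

private lemma entry_lip {d : ℕ} {G : (Fin d → ℝ) → Matrix (Fin d) (Fin d) ℝ} {LG : ℝ}
    (hlip : ∀ m ∈ PD d, ∀ m' ∈ PD d,
      (∑ x, ∑ y, |G m x y - G m' x y|) ≤ LG * l1 fun x => m x - m' x)
    {m m' : Fin d → ℝ} (hm : m ∈ PD d) (hm' : m' ∈ PD d) (z y : Fin d) :
    |G m z y - G m' z y| ≤ LG * l1 fun x => m x - m' x := by
  calc |G m z y - G m' z y|
      ≤ ∑ y', |G m z y' - G m' z y'| :=
        Finset.single_le_sum (f := fun y' => |G m z y' - G m' z y'|)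
          (fun w _ => abs_nonneg _) (Finset.mem_univ y)
    _ ≤ ∑ x, ∑ y', |G m x y' - G m' x y'| :=
        Finset.single_le_sum (f := fun x => ∑ y', |G m x y' - G m' x y'|)
          (fun w _ => Finset.sum_nonneg fun _ _ => abs_nonneg _) (Finset.mem_univ z)
    _ ≤ LG * l1 fun x => m x - m' x := hlip m hm m' hm' 

section Chain2

variable {P : Measure Ω} {G : (Fin d → ℝ) → Matrix (Fin d) (Fin d) ℝ} {x₀ : Fin d}
  {X : ℕ → Ω → Fin d} {L : ℕ → Ω → Fin d → ℝ}

private lemma l1_L_diff (hchain : IsSelfInteractingChain P G x₀ X L) (N j : ℕ) (ω : Ω) :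
    l1 (fun z => L (N + j + 1) ω z - L (N + 1) ω z) ≤ 2 * j / (N + 1) := by
  have ha : (0 : ℝ) < (N : ℝ) + 1 := by positivity
  have hb : (0 : ℝ) < (N : ℝ) + (j : ℝ) + 1 := by positivity
  have hab : (N : ℝ) + 1 ≤ (N : ℝ) + (j : ℝ) + 1 := by
    have : (0 : ℝ) ≤ (j : ℝ) := Nat.cast_nonneg j
    linarith
  set S : Fin d → ℝ := fun z => ∑ i ∈ Finset.range (N + 1), if X i ω = z then (1 : ℝ) else 0
    with hS
  set U : Fin d → ℝ := fun z => ∑ i ∈ Finset.Ico (N + 1) (N + j + 1),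
    if X i ω = z then (1 : ℝ) else 0 with hU
  have hSnn : ∀ z, 0 ≤ S z := fun z => Finset.sum_nonneg fun i _ => by positivity
  have hUnn : ∀ z, 0 ≤ U z := fun z => Finset.sum_nonneg fun i _ => by positivity
  have hSsum : ∑ z, S z = (N : ℝ) + 1 := by
    rw [hS, Finset.sum_comm]
    simp
  have hUsum : ∑ z, U z = (j : ℝ) := by
    rw [hU, Finset.sum_comm]
    simp
  have hLa : ∀ z, L (N + 1) ω z = S z / ((N : ℝ) + 1) := fun z => hchain.emp N ω z
  have hLb : ∀ z, L (N + j + 1) ω z = (S z + U z) / ((N : ℝ) + (j : ℝ) + 1) := by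
    intro z
    have h0 : L (N + j + 1) ω z
        = (∑ i ∈ Finset.range (N + j + 1), if X i ω = z then (1 : ℝ) else 0)
          / ((N + j : ℕ) + 1) := hchain.emp (N + j) ω z
    rw [h0]
    have hsplit : ∑ i ∈ Finset.range (N + j + 1), (if X i ω = z then (1 : ℝ) else 0)
        = S z + U z := by
      rw [hS, hU]
      simp only [Finset.range_eq_Ico]
      rw [← Finset.sum_Ico_consecutive (fun i => if X i ω = z then (1 : ℝ) else 0)
        (Nat.zero_le (N + 1)) (by omega)]
    rw [hsplit]
    congr 1
    push_cast
    ring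
  have hpt : ∀ z, |L (N + j + 1) ω z - L (N + 1) ω z|
      ≤ U z / ((N : ℝ) + (j : ℝ) + 1)
        + S z * (1 / ((N : ℝ) + 1) - 1 / ((N : ℝ) + (j : ℝ) + 1)) := by
    intro z
    rw [hLa, hLb]
    have heq : (S z + U z) / ((N : ℝ) + (j : ℝ) + 1) - S z / ((N : ℝ) + 1)
        = U z / ((N : ℝ) + (j : ℝ) + 1)
          - S z * (1 / ((N : ℝ) + 1) - 1 / ((N : ℝ) + (j : ℝ) + 1)) := by
      field_simp
      ring
    rw [heq]
    refine (abs_sub _ _).trans ?_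
    rw [abs_of_nonneg (div_nonneg (hUnn z) hb.le),
      abs_of_nonneg (mul_nonneg (hSnn z) (by
        have := one_div_le_one_div_of_le ha hab
        linarith))]
  calc l1 (fun z => L (N + j + 1) ω z - L (N + 1) ω z)
      ≤ ∑ z, (U z / ((N : ℝ) + (j : ℝ) + 1)
        + S z * (1 / ((N : ℝ) + 1) - 1 / ((N : ℝ) + (j : ℝ) + 1))) :=
        Finset.sum_le_sum fun z _ => hpt z
    _ = 2 * (j : ℝ) / ((N : ℝ) + (j : ℝ) + 1) := by
        rw [Finset.sum_add_distrib, ← Finset.sum_div, hUsum, ← Finset.sum_mul, hSsum]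
        field_simp
        ring
    _ ≤ 2 * (j : ℝ) / ((N : ℝ) + 1) := by
        apply div_le_div_of_nonneg_left (by positivity) ha hab

private lemma cond_mul [IsProbabilityMeasure P]
    (hchain : IsSelfInteractingChain P G x₀ X L)
    {n N : ℕ} (hNn : N ≤ n) {s : Set Ω} (hs : MeasurableSet[chainFilt X n] s)
    {h : Ω → ℝ} (hh : Cyl X N h) (y : Fin d) :
    ∫ ω in s, (if X (n + 1) ω = y then (1 : ℝ) else 0) * h ω ∂P
      = ∫ ω in s, G (L (n + 1) ω) (X n ω) y * h ω ∂P := by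
  obtain ⟨φ, hφ⟩ := hh
  have hX := hchain.measX
  set A : (Fin (N + 1) → Fin d) → Set Ω := fun v => vecb X N ⁻¹' {v} with hA
  have hAfilt : ∀ v, MeasurableSet[chainFilt X n] (A v) := by
    intro v
    have hAv : A v = ⋂ i : Fin (N + 1), X (i : ℕ) ⁻¹' {v i} := by
      ext ω
      simp [hA, vecb, funext_iff]
    rw [hAv]
    exact MeasurableSet.iInter fun i =>
      measurableSet_chainFilt (le_trans (by omega) hNn) _
  have hAmeas : ∀ v, MeasurableSet (A v) :=
    fun v => chainFilt_le hX n _ (hAfilt v)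
  have key : ∀ (m : ℕ) (f : Ω → ℝ), Cyl X m f →
      ∫ ω in s, f ω * h ω ∂P = ∑ v, (∫ ω in s ∩ A v, f ω ∂P) * φ v := by
    intro m f hf
    have h1 : ∀ ω, f ω * h ω = ∑ v, (A v).indicator (fun ω' => f ω' * φ v) ω := by
      intro ω
      have h2 : ∀ v, (A v).indicator (fun ω' => f ω' * φ v) ω
          = if vecb X N ω = v then f ω * φ v else 0 := by
        intro v
        by_cases hv : vecb X N ω = v <;>
          simp [Set.indicator_apply, hA, Set.mem_preimage, Set.mem_singleton_iff, hv]
      rw [Finset.sum_congr rfl fun v _ => h2 v, Finset.sum_ite_eq, if_pos (Finset.mem_univ _),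
        hφ ω]
    have hint : ∀ v, Integrable ((A v).indicator (fun ω' => f ω' * φ v)) P := by
      intro v
      exact ((hf.mul (Cyl.const m (φ v))).integrable hX P).indicator (hAmeas v)
    calc ∫ ω in s, f ω * h ω ∂P
        = ∫ ω in s, ∑ v, (A v).indicator (fun ω' => f ω' * φ v) ω ∂P := by
          simp_rw [h1]
      _ = ∑ v, ∫ ω in s, (A v).indicator (fun ω' => f ω' * φ v) ω ∂P :=
          integral_finset_sum _ fun v _ => (hint v).integrableOn
      _ = ∑ v, ∫ ω in s ∩ A v, f ω * φ v ∂P :=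
          Finset.sum_congr rfl fun v _ => setIntegral_indicator (hAmeas v)
      _ = ∑ v, (∫ ω in s ∩ A v, f ω ∂P) * φ v :=
          Finset.sum_congr rfl fun v _ => integral_mul_const _ _
  rw [key (n + 1) _ (Cyl.indic (le_refl (n + 1)) y),
    key n _ (cyl_of_L hchain n fun mm z => G mm z y)]
  refine Finset.sum_congr rfl fun v _ => ?_
  rw [hchain.cond n y (s ∩ A v) (hs.inter (hAfilt v))]

end Chain2

private lemma setIntegral_event {X : ℕ → Ω → Fin d} (hX : ∀ n, Measurable (X n))
    (P : Measure Ω) (s : Set Ω) (k : ℕ) (z : Fin d) (f : Ω → ℝ) :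
    ∫ ω in s ∩ {ω | X k ω = z}, f ω ∂P = ∫ ω in s, (if X k ω = z then f ω else 0) ∂P := by
  have hmeas : MeasurableSet {ω | X k ω = z} := hX k (measurableSet_singleton z)
  rw [← setIntegral_indicator hmeas]
  simp only [Set.indicator_apply, Set.mem_setOf_eq]

private lemma exists_unif_eps (G : (Fin d → ℝ) → Matrix (Fin d) (Fin d) ℝ)
    (hker : ∀ m ∈ PD d, IsKernel (G m))
    (LG : ℝ) (hLG : 0 < LG)
    (hlip : ∀ m ∈ PD d, ∀ m' ∈ PD d,
      (∑ x, ∑ y, |G m x y - G m' x y|) ≤ LG * l1 fun x => m x - m' x)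
    (K : ℕ) (hK : 1 ≤ K)
    (hpos : ∀ ms : ℕ → Fin d → ℝ, (∀ i, ms i ∈ PD d) → ∀ x y,
      0 < ∑ j ∈ Finset.range K,
        (((List.range (j + 1)).map fun i => G (ms i)).prod) x y) :
    ∃ ε : ℝ, 0 < ε ∧ ε ≤ K ∧
      ∀ m ∈ PD d, ∀ z y, ε ≤ ∑ j ∈ Finset.range K, (G m ^ (j + 1)) z y := by
  have hGc : ∀ z y : Fin d, ContinuousOn (fun m => G m z y) (PD d) := by
    intro z y
    refine LipschitzOnWith.continuousOn (K := (LG * d).toNNReal) ?_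
    refine LipschitzOnWith.of_dist_le_mul fun m hm m' hm' => ?_
    rw [Real.coe_toNNReal _ (by positivity), Real.dist_eq]
    refine (entry_lip hlip hm hm' z y).trans ?_
    have h1 : l1 (fun x => m x - m' x) ≤ d * dist m m' := by
      rw [l1]
      calc ∑ x, |m x - m' x| ≤ ∑ _x : Fin d, dist m m' :=
            Finset.sum_le_sum fun x _ => by
              rw [← Real.dist_eq]; exact dist_le_pi_dist m m' x
        _ = d * dist m m' := by
          rw [Finset.sum_const, Finset.card_univ, Fintype.card_fin, nsmul_eq_mul]
    calc LG * l1 (fun x => m x - m' x) ≤ LG * (d * dist m m') :=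
          mul_le_mul_of_nonneg_left h1 hLG.le
      _ = LG * d * dist m m' := by ring
  have hpowc : ∀ (k : ℕ) (z y : Fin d), ContinuousOn (fun m => (G m ^ k) z y) (PD d) := by
    intro k
    induction k with
    | zero =>
        intro z y
        simp only [pow_zero, Matrix.one_apply]
        exact continuousOn_const
    | succ k ih =>
        intro z y
        have hrw : (fun m => (G m ^ (k + 1)) z y) = fun m => ∑ w, (G m ^ k) z w * G m w y := by
          funext m
          rw [pow_succ, Matrix.mul_apply]
        rw [hrw]
        exact continuousOn_finset_sum _ fun w _ => (ih z w).mul (hGc w y)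
  have hpair : ∀ p : Fin d × Fin d, ∃ ε : ℝ, 0 < ε ∧ ε ≤ K ∧
      ∀ m ∈ PD d, ε ≤ ∑ j ∈ Finset.range K, (G m ^ (j + 1)) p.1 p.2 := by
    intro p
    have hcont : ContinuousOn (fun m => ∑ j ∈ Finset.range K, (G m ^ (j + 1)) p.1 p.2) (PD d) :=
      continuousOn_finset_sum _ fun j _ => hpowc (j + 1) p.1 p.2
    have hcompact : IsCompact (PD d) := isCompact_stdSimplex _ _
    have hnonempty : (PD d).Nonempty :=
      ⟨_, single_mem_stdSimplex ℝ (⟨0, Nat.pos_of_ne_zero (NeZero.ne d)⟩ : Fin d)⟩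
    obtain ⟨m₀, hm₀, hmin⟩ := hcompact.exists_isMinOn hnonempty hcont
    refine ⟨∑ j ∈ Finset.range K, (G m₀ ^ (j + 1)) p.1 p.2, ?_, ?_,
      fun m hm => isMinOn_iff.mp hmin m hm⟩
    · have hthis := hpos (fun _ => m₀) (fun _ => hm₀) p.1 p.2
      simpa only [List.map_const', List.length_range, List.prod_replicate] using hthis
    · calc ∑ j ∈ Finset.range K, (G m₀ ^ (j + 1)) p.1 p.2
          ≤ ∑ _j ∈ Finset.range K, (1 : ℝ) := Finset.sum_le_sum fun j _ =>
            kernel_entry_le_one (isKernel_pow (hker m₀ hm₀) (j + 1)) p.1 p.2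
        _ = K := by simp
  choose εf hεf0 hεfK hεfle using hpair
  have hne : (Finset.univ : Finset (Fin d × Fin d)).Nonempty := Finset.univ_nonempty
  refine ⟨Finset.univ.inf' hne εf, ?_, ?_, ?_⟩
  · rw [Finset.lt_inf'_iff]
    exact fun p _ => hεf0 p
  · obtain ⟨p, hp⟩ := hne
    exact (Finset.inf'_le εf hp).trans (hεfK p)
  · intro m hm z y
    exact (Finset.inf'_le εf (Finset.mem_univ (z, y))).trans (hεfle (z, y) m hm)

private lemma Cyl.ite_mul {X : ℕ → Ω → Fin d} {n k : ℕ} (hk : k ≤ n) (z : Fin d) {h : Ω → ℝ}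
    (hh : Cyl X n h) : Cyl X n fun ω => if X k ω = z then h ω else 0 := by
  obtain ⟨φ, hφ⟩ := hh
  refine ⟨fun v => if v ⟨k, by omega⟩ = z then φ v else 0, fun ω => ?_⟩
  show (if X k ω = z then h ω else 0) = _
  rw [hφ ω]
  rfl

end A2Aux

/-- **(Appendix Lemma A.2.)** Suppose `G` satisfies Assumption L and for some `K ∈ ℕ`,
for all `m₁, …, m_K ∈ P(Δ°)` and all `x, y`,
`∑_{j=1}^K (G(m₁)G(m₂)⋯G(m_j))(x,y) > 0`. Then for every `x`,
`P(∃ n : L^n(x) > 0) = 1`. -/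
theorem empirical_measure_nondegenerate {d : ℕ} [NeZero d] {Ω : Type*} [MeasurableSpace Ω]
    (P : Measure Ω) [IsProbabilityMeasure P]
    (G : (Fin d → ℝ) → Matrix (Fin d) (Fin d) ℝ) (x₀ : Fin d)
    (X : ℕ → Ω → Fin d) (L : ℕ → Ω → Fin d → ℝ)
    (hchain : IsSelfInteractingChain P G x₀ X L)
    (hG : AssumptionL G)
    (K : ℕ) (hK : 1 ≤ K)
    (hpos : ∀ ms : ℕ → Fin d → ℝ, (∀ i, ms i ∈ PD d) → ∀ x y,
      0 < ∑ j ∈ Finset.range K,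
        (((List.range (j + 1)).map fun i => G (ms i)).prod) x y) :
    ∀ x, P {ω | ∃ n : ℕ, 0 < L (n + 1) ω x} = 1 := by
  classical
  obtain ⟨hker, LG, hLG, hlip⟩ := hG
  have hX := hchain.measX
  intro x
  -- the "no visit to x up to time n" events
  set Bs : ℕ → Set Ω := fun n => {ω | ∀ i, i ≤ n → X i ω ≠ x} with hBs
  have hBs_eq : ∀ n, Bs n = ⋂ i : Fin (n + 1), X (i : ℕ) ⁻¹' {x}ᶜ := by
    intro n
    ext ω
    simp only [hBs, Set.mem_setOf_eq, Set.mem_iInter, Set.mem_preimage, Set.mem_compl_iff,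
      Set.mem_singleton_iff]
    constructor
    · intro hh i; exact hh i.1 (by omega)
    · intro hh i hi; exact hh ⟨i, by omega⟩
  have hBs_filt : ∀ n, MeasurableSet[chainFilt X n] (Bs n) := by
    intro n
    rw [hBs_eq]
    exact MeasurableSet.iInter fun i => measurableSet_chainFilt (by omega) _
  have hBs_meas : ∀ n, MeasurableSet (Bs n) := fun n => chainFilt_le hX n _ (hBs_filt n)
  have hBs_anti : ∀ {n m : ℕ}, n ≤ m → Bs m ⊆ Bs n := by
    intro n m hnm ω hω i hi
    exact hω i (le_trans hi hnm)
  obtain ⟨ε, hε0, hεK, hεle⟩ := exists_unif_eps G hker LG hLG hlip K hK hpos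
  -- error amplification sequence
  set errf : ℕ → ℝ := fun j => Nat.rec 0 (fun _ e => (d : ℝ) * e + 1) j with herrf
  have herr0 : errf 0 = 0 := rfl
  have herrsucc : ∀ j, errf (j + 1) = (d : ℝ) * errf j + 1 := fun j => rfl
  have hd1 : (1 : ℝ) ≤ (d : ℝ) := by
    exact_mod_cast Nat.one_le_iff_ne_zero.mpr (NeZero.ne d)
  have herrnn : ∀ j, 0 ≤ errf j := by
    intro j
    induction j with
    | zero => rw [herr0]
    | succ j ih => rw [herrsucc]; nlinarith
  have herrmono : Monotone errf := by
    refine monotone_nat_of_le_succ fun j => ?_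
    rw [herrsucc]
    nlinarith [herrnn j]
  -- MAIN INDUCTION : lower bound for the k-step transition integrals
  have main : ∀ N : ℕ, ∀ j : ℕ, j ≤ K → ∀ h : Ω → ℝ, Cyl X N h → (∀ ω, 0 ≤ h ω) →
      ∀ y : Fin d,
      (∫ ω in Bs N, (G (L (N + 1) ω) ^ j) (X N ω) y * h ω ∂P)
        - (2 * (K : ℝ) * LG / ((N : ℝ) + 1)) * errf j * (∫ ω in Bs N, h ω ∂P)
      ≤ ∫ ω in Bs N ∩ {ω | X (N + j) ω = y}, h ω ∂P := by
    intro N j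
    induction j with
    | zero =>
        intro _ h hh hhnn y
        rw [herr0]
        simp only [mul_zero, zero_mul, sub_zero, Nat.add_zero, pow_zero]
        rw [setIntegral_event hX P (Bs N) N y h]
        refine le_of_eq ?_
        have hpt : ∀ ω, ((1 : Matrix (Fin d) (Fin d) ℝ) (X N ω) y) * h ω
            = if X N ω = y then h ω else 0 := by
          intro ω
          rw [Matrix.one_apply]
          split <;> simp
        simp_rw [hpt]
    | succ j ih =>
        intro hjK h hh hhnn y
        have hjK' : j ≤ K := by omega
        have hNpos : (0 : ℝ) < (N : ℝ) + 1 := by positivity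
        have hδnn : (0 : ℝ) ≤ 2 * (K : ℝ) * LG / ((N : ℝ) + 1) := by positivity
        -- step 1 : decompose over the value of `X (N+j)`
        have hcylj : ∀ z : Fin d, Cyl X (N + j + 1) fun ω =>
            if X (N + j) ω = z then (if X (N + j + 1) ω = y then h ω else 0) else 0 :=
          fun z => Cyl.ite_mul (by omega) z (Cyl.ite_mul (by omega) y (hh.mono (by omega)))
        have step1 : ∫ ω in Bs N ∩ {ω | X (N + (j + 1)) ω = y}, h ω ∂P
            = ∑ z, ∫ ω in Bs N ∩ {ω | X (N + j) ω = z},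
                (if X (N + j + 1) ω = y then (1 : ℝ) else 0) * h ω ∂P := by
          calc ∫ ω in Bs N ∩ {ω | X (N + (j + 1)) ω = y}, h ω ∂P
              = ∫ ω in Bs N, (if X (N + j + 1) ω = y then h ω else 0) ∂P :=
                setIntegral_event hX P (Bs N) (N + j + 1) y h
            _ = ∫ ω in Bs N, ∑ z, (if X (N + j) ω = z then
                  (if X (N + j + 1) ω = y then h ω else 0) else 0) ∂P := by
                have e2 : ∀ ω, (if X (N + j + 1) ω = y then h ω else 0)
                    = ∑ z, (if X (N + j) ω = z then
                        (if X (N + j + 1) ω = y then h ω else 0) else 0) := by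
                  intro ω
                  rw [Finset.sum_ite_eq, if_pos (Finset.mem_univ _)]
                simp_rw [← e2]
            _ = ∑ z, ∫ ω in Bs N, (if X (N + j) ω = z then
                  (if X (N + j + 1) ω = y then h ω else 0) else 0) ∂P :=
                integral_finset_sum _ fun z _ => ((hcylj z).integrable hX P).integrableOn
            _ = ∑ z, ∫ ω in Bs N ∩ {ω | X (N + j) ω = z},
                  (if X (N + j + 1) ω = y then h ω else 0) ∂P :=
                Finset.sum_congr rfl fun z _ => (setIntegral_event hX P (Bs N) (N + j) z _).symm
            _ = ∑ z, ∫ ω in Bs N ∩ {ω | X (N + j) ω = z},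
                  (if X (N + j + 1) ω = y then (1 : ℝ) else 0) * h ω ∂P := by
                refine Finset.sum_congr rfl fun z _ => ?_
                congr 1
                funext ω
                split <;> simp
        -- step 2 : the conditional law
        have hBCfilt : ∀ z : Fin d,
            MeasurableSet[chainFilt X (N + j)] (Bs N ∩ {ω | X (N + j) ω = z}) :=
          fun z => (chainFilt_mono (Nat.le_add_right N j) _ (hBs_filt N)).inter
            (measurableSet_chainFilt le_rfl {z})
        have hBCmeas : ∀ z : Fin d, MeasurableSet (Bs N ∩ {ω | X (N + j) ω = z}) :=
          fun z => (hBs_meas N).inter (hX (N + j) (measurableSet_singleton z))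
        have step2 : ∀ z : Fin d,
            ∫ ω in Bs N ∩ {ω | X (N + j) ω = z},
              (if X (N + j + 1) ω = y then (1 : ℝ) else 0) * h ω ∂P
            = ∫ ω in Bs N ∩ {ω | X (N + j) ω = z},
              G (L (N + j + 1) ω) (X (N + j) ω) y * h ω ∂P :=
          fun z => cond_mul hchain (Nat.le_add_right N j) (hBCfilt z) hh y
        -- step 3 : pointwise comparison with the frozen kernel
        have hpt : ∀ z : Fin d, ∀ ω ∈ Bs N ∩ {ω | X (N + j) ω = z},
            (G (L (N + 1) ω) z y - 2 * (K : ℝ) * LG / ((N : ℝ) + 1)) * h ω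
              ≤ G (L (N + j + 1) ω) (X (N + j) ω) y * h ω := by
          intro z ω hω
          have hXω : X (N + j) ω = z := hω.2
          rw [hXω]
          refine mul_le_mul_of_nonneg_right ?_ (hhnn ω)
          have habs : |G (L (N + j + 1) ω) z y - G (L (N + 1) ω) z y|
              ≤ 2 * (K : ℝ) * LG / ((N : ℝ) + 1) := by
            refine (entry_lip hlip (L_mem hchain (N + j) ω) (L_mem hchain N ω) z y).trans ?_
            have hl1 := l1_L_diff hchain N j ω
            have hjKr : (j : ℝ) ≤ (K : ℝ) := by exact_mod_cast hjK'
            calc LG * l1 (fun zz => L (N + j + 1) ω zz - L (N + 1) ω zz)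
                ≤ LG * (2 * (j : ℝ) / ((N : ℝ) + 1)) := mul_le_mul_of_nonneg_left hl1 hLG.le
              _ = 2 * (j : ℝ) * LG / ((N : ℝ) + 1) := by ring
              _ ≤ 2 * (K : ℝ) * LG / ((N : ℝ) + 1) := by
                  have h2 : 2 * (j : ℝ) * LG ≤ 2 * (K : ℝ) * LG := by nlinarith
                  exact div_le_div_of_nonneg_right h2 hNpos.le
          linarith [(abs_le.mp habs).1]
        -- integrable families
        have hintL : ∀ z : Fin d, IntegrableOn
            (fun ω => (G (L (N + 1) ω) z y - 2 * (K : ℝ) * LG / ((N : ℝ) + 1)) * h ω)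
            (Bs N ∩ {ω | X (N + j) ω = z}) P :=
          fun z => (((cyl_of_L hchain N fun m _ =>
            G m z y - 2 * (K : ℝ) * LG / ((N : ℝ) + 1)).mul hh).integrable hX P).integrableOn
        have hintR : ∀ z : Fin d, IntegrableOn
            (fun ω => G (L (N + j + 1) ω) (X (N + j) ω) y * h ω)
            (Bs N ∩ {ω | X (N + j) ω = z}) P :=
          fun z => (((cyl_of_L hchain (N + j) fun m w => G m w y).mul
            (hh.mono (Nat.le_add_right N j))).integrable hX P).integrableOn
        have hintGz : ∀ z : Fin d, Integrable (fun ω => G (L (N + 1) ω) z y * h ω) P :=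
          fun z => ((cyl_of_L hchain N fun m _ => G m z y).mul hh).integrable hX P
        have hinth : Integrable h P := hh.integrable hX P
        have hintpow : ∀ z : Fin d, Integrable
            (fun ω => (G (L (N + 1) ω) ^ j) (X N ω) z * (G (L (N + 1) ω) z y * h ω)) P :=
          fun z => ((cyl_of_L hchain N fun m w => (G m ^ j) w z).mul
            ((cyl_of_L hchain N fun m _ => G m z y).mul hh)).integrable hX P
        -- decomposition of ∫_B h over the value of X (N+j)
        have hsplitB : ∑ z, ∫ ω in Bs N ∩ {ω | X (N + j) ω = z}, h ω ∂P
            = ∫ ω in Bs N, h ω ∂P := by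
          have e1 : ∀ z : Fin d, ∫ ω in Bs N ∩ {ω | X (N + j) ω = z}, h ω ∂P
              = ∫ ω in Bs N, (if X (N + j) ω = z then h ω else 0) ∂P :=
            fun z => setIntegral_event hX P (Bs N) (N + j) z h
          rw [Finset.sum_congr rfl fun z _ => e1 z, ← integral_finset_sum _ fun z _ =>
            ((Cyl.ite_mul (le_refl (N + j)) z (hh.mono (Nat.le_add_right N j))).integrable
              hX P).integrableOn]
          have e2 : ∀ ω, (∑ z, if X (N + j) ω = z then h ω else 0) = h ω := by
            intro ω
            rw [Finset.sum_ite_eq, if_pos (Finset.mem_univ _)]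
          simp_rw [e2]
        -- the inductive bound for each z
        have hih : ∀ z : Fin d,
            (∫ ω in Bs N, (G (L (N + 1) ω) ^ j) (X N ω) z * (G (L (N + 1) ω) z y * h ω) ∂P)
              - (2 * (K : ℝ) * LG / ((N : ℝ) + 1)) * errf j
                * (∫ ω in Bs N, G (L (N + 1) ω) z y * h ω ∂P)
            ≤ ∫ ω in Bs N ∩ {ω | X (N + j) ω = z}, G (L (N + 1) ω) z y * h ω ∂P :=
          fun z => ih hjK' (fun ω => G (L (N + 1) ω) z y * h ω)
            ((cyl_of_L hchain N fun m _ => G m z y).mul hh)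
            (fun ω => mul_nonneg (kernel_entry_nonneg (hker _ (L_mem hchain N ω)) z y) (hhnn ω)) z
        -- ∫_B (G z y * h) ≤ ∫_B h
        have hGzh : ∀ z : Fin d, ∫ ω in Bs N, G (L (N + 1) ω) z y * h ω ∂P
            ≤ ∫ ω in Bs N, h ω ∂P := by
          intro z
          refine setIntegral_mono_on ((hintGz z).integrableOn) (hinth.integrableOn)
            (hBs_meas N) fun ω _ => ?_
          exact mul_le_of_le_one_left (hhnn ω)
            (kernel_entry_le_one (hker _ (L_mem hchain N ω)) z y)
        have hGzhnn : ∀ z : Fin d, 0 ≤ ∫ ω in Bs N, G (L (N + 1) ω) z y * h ω ∂P :=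
          fun z => setIntegral_nonneg (hBs_meas N) fun ω _ =>
            mul_nonneg (kernel_entry_nonneg (hker _ (L_mem hchain N ω)) z y) (hhnn ω)
        have hBhnn : 0 ≤ ∫ ω in Bs N, h ω ∂P :=
          setIntegral_nonneg (hBs_meas N) fun ω _ => hhnn ω
        -- matrix power identity
        have hpow : ∑ z, ∫ ω in Bs N,
              (G (L (N + 1) ω) ^ j) (X N ω) z * (G (L (N + 1) ω) z y * h ω) ∂P
            = ∫ ω in Bs N, (G (L (N + 1) ω) ^ (j + 1)) (X N ω) y * h ω ∂P := by
          rw [← integral_finset_sum _ fun z _ => (hintpow z).integrableOn]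
          have e3 : ∀ ω, (∑ z, (G (L (N + 1) ω) ^ j) (X N ω) z * (G (L (N + 1) ω) z y * h ω))
              = (G (L (N + 1) ω) ^ (j + 1)) (X N ω) y * h ω := by
            intro ω
            rw [pow_succ, Matrix.mul_apply, Finset.sum_mul]
            exact Finset.sum_congr rfl fun z _ => (mul_assoc _ _ _).symm
          simp_rw [e3]
        -- assemble
        calc (∫ ω in Bs N, (G (L (N + 1) ω) ^ (j + 1)) (X N ω) y * h ω ∂P)
              - (2 * (K : ℝ) * LG / ((N : ℝ) + 1)) * errf (j + 1)
                * (∫ ω in Bs N, h ω ∂P)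
            = (∑ z, ∫ ω in Bs N,
                  (G (L (N + 1) ω) ^ j) (X N ω) z * (G (L (N + 1) ω) z y * h ω) ∂P)
                - (2 * (K : ℝ) * LG / ((N : ℝ) + 1)) * errf j
                    * ((d : ℝ) * (∫ ω in Bs N, h ω ∂P))
                - (2 * (K : ℝ) * LG / ((N : ℝ) + 1)) * (∫ ω in Bs N, h ω ∂P) := by
              rw [hpow, herrsucc]
              ring
          _ ≤ (∑ z, ∫ ω in Bs N,
                  (G (L (N + 1) ω) ^ j) (X N ω) z * (G (L (N + 1) ω) z y * h ω) ∂P)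
                - (∑ z, (2 * (K : ℝ) * LG / ((N : ℝ) + 1)) * errf j
                    * (∫ ω in Bs N, G (L (N + 1) ω) z y * h ω ∂P))
                - (2 * (K : ℝ) * LG / ((N : ℝ) + 1)) * (∫ ω in Bs N, h ω ∂P) := by
              have hb : ∑ z, (2 * (K : ℝ) * LG / ((N : ℝ) + 1)) * errf j
                    * (∫ ω in Bs N, G (L (N + 1) ω) z y * h ω ∂P)
                  ≤ (2 * (K : ℝ) * LG / ((N : ℝ) + 1)) * errf j
                    * ((d : ℝ) * (∫ ω in Bs N, h ω ∂P)) := by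
                have hcoef : (0 : ℝ) ≤ (2 * (K : ℝ) * LG / ((N : ℝ) + 1)) * errf j :=
                  mul_nonneg hδnn (herrnn j)
                calc ∑ z, (2 * (K : ℝ) * LG / ((N : ℝ) + 1)) * errf j
                      * (∫ ω in Bs N, G (L (N + 1) ω) z y * h ω ∂P)
                    ≤ ∑ _z : Fin d, (2 * (K : ℝ) * LG / ((N : ℝ) + 1)) * errf j
                      * (∫ ω in Bs N, h ω ∂P) :=
                      Finset.sum_le_sum fun z _ =>
                        mul_le_mul_of_nonneg_left (hGzh z) hcoef
                  _ = (2 * (K : ℝ) * LG / ((N : ℝ) + 1)) * errf j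
                      * ((d : ℝ) * (∫ ω in Bs N, h ω ∂P)) := by
                      rw [Finset.sum_const, Finset.card_univ, Fintype.card_fin, nsmul_eq_mul]
                      ring
              linarith
          _ = (∑ z, ((∫ ω in Bs N,
                  (G (L (N + 1) ω) ^ j) (X N ω) z * (G (L (N + 1) ω) z y * h ω) ∂P)
                - (2 * (K : ℝ) * LG / ((N : ℝ) + 1)) * errf j
                    * (∫ ω in Bs N, G (L (N + 1) ω) z y * h ω ∂P)))
                - (2 * (K : ℝ) * LG / ((N : ℝ) + 1)) * (∫ ω in Bs N, h ω ∂P) := by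
              rw [Finset.sum_sub_distrib]
          _ ≤ (∑ z, ∫ ω in Bs N ∩ {ω | X (N + j) ω = z}, G (L (N + 1) ω) z y * h ω ∂P)
                - (2 * (K : ℝ) * LG / ((N : ℝ) + 1)) * (∫ ω in Bs N, h ω ∂P) := by
              have := Finset.sum_le_sum fun z (_ : z ∈ Finset.univ) => hih z
              linarith
          _ = ∑ z, ((∫ ω in Bs N ∩ {ω | X (N + j) ω = z}, G (L (N + 1) ω) z y * h ω ∂P)
                - (2 * (K : ℝ) * LG / ((N : ℝ) + 1))
                    * (∫ ω in Bs N ∩ {ω | X (N + j) ω = z}, h ω ∂P)) := by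
              rw [Finset.sum_sub_distrib, ← Finset.mul_sum, hsplitB]
          _ = ∑ z, ∫ ω in Bs N ∩ {ω | X (N + j) ω = z},
                (G (L (N + 1) ω) z y - 2 * (K : ℝ) * LG / ((N : ℝ) + 1)) * h ω ∂P := by
              refine Finset.sum_congr rfl fun z _ => ?_
              have e4 : ∀ ω, (G (L (N + 1) ω) z y - 2 * (K : ℝ) * LG / ((N : ℝ) + 1)) * h ω
                  = G (L (N + 1) ω) z y * h ω
                    - (2 * (K : ℝ) * LG / ((N : ℝ) + 1)) * h ω := by
                intro ω; ring
              simp_rw [e4]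
              rw [integral_sub ((hintGz z).integrableOn)
                ((hinth.const_mul _).integrableOn), integral_const_mul]
          _ ≤ ∑ z, ∫ ω in Bs N ∩ {ω | X (N + j) ω = z},
                G (L (N + j + 1) ω) (X (N + j) ω) y * h ω ∂P :=
              Finset.sum_le_sum fun z _ => setIntegral_mono_on (hintL z) (hintR z)
                (hBCmeas z) (hpt z)
          _ = ∑ z, ∫ ω in Bs N ∩ {ω | X (N + j) ω = z},
                (if X (N + j + 1) ω = y then (1 : ℝ) else 0) * h ω ∂P :=
              Finset.sum_congr rfl fun z _ => (step2 z).symm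
          _ = ∫ ω in Bs N ∩ {ω | X (N + (j + 1)) ω = y}, h ω ∂P := step1.symm
  -- probabilities of the no-visit events
  set p : ℕ → ℝ := fun n => (P (Bs n)).toReal with hpdef
  have hpnn : ∀ n, 0 ≤ p n := fun n => ENNReal.toReal_nonneg
  have hple1 : ∀ n, p n ≤ 1 := fun n =>
    (ENNReal.toReal_mono ENNReal.one_ne_top prob_le_one).trans_eq ENNReal.toReal_one
  have hKpos : (0 : ℝ) < (K : ℝ) := by exact_mod_cast hK
  set E := errf K with hE
  have hEnn : 0 ≤ E := herrnn K
  obtain ⟨N₀, hN₀⟩ := exists_nat_gt (2 * (2 * (K : ℝ) * LG * E * K) / ε)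
  have hrec : ∀ N, N₀ ≤ N → p (N + K) ≤ (1 - ε / (2 * K)) * p N := by
    intro N hN
    have hNpos : (0 : ℝ) < (N : ℝ) + 1 := by positivity
    have hδnn : (0 : ℝ) ≤ 2 * (K : ℝ) * LG / ((N : ℝ) + 1) := by positivity
    have hints : ∀ j : ℕ, Integrable
        (fun ω => (G (L (N + 1) ω) ^ (j + 1)) (X N ω) x) P :=
      fun j => (cyl_of_L hchain N fun m w => (G m ^ (j + 1)) w x).integrable hX P
    have hq1 : ∀ j ∈ Finset.range K,
        (∫ ω in Bs N, (G (L (N + 1) ω) ^ (j + 1)) (X N ω) x ∂P)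
            - (2 * (K : ℝ) * LG / ((N : ℝ) + 1)) * E * p N
          ≤ (P (Bs N ∩ {ω | X (N + (j + 1)) ω = x})).toReal := by
      intro j hj
      have hj' : j + 1 ≤ K := Finset.mem_range.mp hj
      have hmain := main N (j + 1) hj' (fun _ => (1 : ℝ)) (Cyl.const N 1)
        (fun _ => zero_le_one) x
      simp only [mul_one] at hmain
      rw [setIntegral_const, setIntegral_const] at hmain
      simp only [smul_eq_mul, mul_one] at hmain
      simp only [measureReal_def] at hmain
      refine le_trans ?_ hmain
      have h1 : errf (j + 1) ≤ E := herrmono hj'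
      have h2 : (2 * (K : ℝ) * LG / ((N : ℝ) + 1)) * errf (j + 1) * p N
          ≤ (2 * (K : ℝ) * LG / ((N : ℝ) + 1)) * E * p N :=
        mul_le_mul_of_nonneg_right (mul_le_mul_of_nonneg_left h1 hδnn) (hpnn N)
      linarith
    have hq2 : ∀ j ∈ Finset.range K,
        (P (Bs N ∩ {ω | X (N + (j + 1)) ω = x})).toReal ≤ p N - p (N + K) := by
      intro j hj
      have hjlt := Finset.mem_range.mp hj
      have hdisj : Disjoint (Bs N ∩ {ω | X (N + (j + 1)) ω = x}) (Bs (N + K)) := by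
        rw [Set.disjoint_left]
        rintro ω ⟨-, hωx⟩ hωB
        exact hωB (N + (j + 1)) (by omega) hωx
      have hsub : (Bs N ∩ {ω | X (N + (j + 1)) ω = x}) ∪ Bs (N + K) ⊆ Bs N :=
        Set.union_subset Set.inter_subset_left (hBs_anti (by omega))
      have hmeasu : P (Bs N ∩ {ω | X (N + (j + 1)) ω = x}) + P (Bs (N + K)) ≤ P (Bs N) := by
        rw [← measure_union hdisj (hBs_meas (N + K))]
        exact measure_mono hsub
      have h1 := ENNReal.toReal_mono (measure_ne_top P _) hmeasu
      rw [ENNReal.toReal_add (measure_ne_top P _) (measure_ne_top P _)] at h1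
      linarith
    have hsum1 : ∑ j ∈ Finset.range K,
        ((∫ ω in Bs N, (G (L (N + 1) ω) ^ (j + 1)) (X N ω) x ∂P)
          - (2 * (K : ℝ) * LG / ((N : ℝ) + 1)) * E * p N)
        ≤ (K : ℝ) * (p N - p (N + K)) := by
      calc ∑ j ∈ Finset.range K,
            ((∫ ω in Bs N, (G (L (N + 1) ω) ^ (j + 1)) (X N ω) x ∂P)
              - (2 * (K : ℝ) * LG / ((N : ℝ) + 1)) * E * p N)
          ≤ ∑ _j ∈ Finset.range K, (p N - p (N + K)) :=
            Finset.sum_le_sum fun j hj => (hq1 j hj).trans (hq2 j hj)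
        _ = (K : ℝ) * (p N - p (N + K)) := by
            rw [Finset.sum_const, Finset.card_range, nsmul_eq_mul]
    have hlow : ε * p N - (K : ℝ) * ((2 * (K : ℝ) * LG / ((N : ℝ) + 1)) * E * p N)
        ≤ ∑ j ∈ Finset.range K,
          ((∫ ω in Bs N, (G (L (N + 1) ω) ^ (j + 1)) (X N ω) x ∂P)
            - (2 * (K : ℝ) * LG / ((N : ℝ) + 1)) * E * p N) := by
      rw [Finset.sum_sub_distrib, Finset.sum_const, Finset.card_range, nsmul_eq_mul]
      have hswap : ∑ j ∈ Finset.range K,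
            ∫ ω in Bs N, (G (L (N + 1) ω) ^ (j + 1)) (X N ω) x ∂P
          = ∫ ω in Bs N, ∑ j ∈ Finset.range K, (G (L (N + 1) ω) ^ (j + 1)) (X N ω) x ∂P :=
        (integral_finset_sum _ fun j _ => (hints j).integrableOn).symm
      have hmono : ε * p N ≤ ∫ ω in Bs N,
          ∑ j ∈ Finset.range K, (G (L (N + 1) ω) ^ (j + 1)) (X N ω) x ∂P := by
        have := setIntegral_mono_on
          ((integrableOn_const (measure_ne_top P _)) :
            IntegrableOn (fun _ => ε) (Bs N) P)
          ((integrable_finset_sum _ fun j _ => hints j).integrableOn)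
          (hBs_meas N)
          (fun ω _ => hεle _ (L_mem hchain N ω) (X N ω) x)
        rw [setIntegral_const, smul_eq_mul] at this
        calc ε * p N = p N * ε := by ring
          _ ≤ _ := this
      linarith [hswap ▸ hmono]
    -- N is large
    have hNlarge : (K : ℝ) * ((2 * (K : ℝ) * LG / ((N : ℝ) + 1)) * E) ≤ ε / 2 := by
      have hcast : (N₀ : ℝ) ≤ (N : ℝ) := by exact_mod_cast hN
      have hNN : 2 * (2 * (K : ℝ) * LG * E * K) / ε < (N : ℝ) + 1 := by
        refine hN₀.trans_le (by linarith)
      have h2 : 2 * (2 * (K : ℝ) * LG * E * K) < ((N : ℝ) + 1) * ε := by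
        rw [div_lt_iff₀ hε0] at hNN
        linarith
      have heq : (K : ℝ) * ((2 * (K : ℝ) * LG / ((N : ℝ) + 1)) * E)
          = (2 * (K : ℝ) * LG * E * K) / ((N : ℝ) + 1) := by
        field_simp
      rw [heq, div_le_iff₀ hNpos]
      nlinarith
    -- combine
    have hc1 : ε * p N - (ε / 2) * p N ≤ (K : ℝ) * (p N - p (N + K)) := by
      have h3 : (K : ℝ) * ((2 * (K : ℝ) * LG / ((N : ℝ) + 1)) * E) * p N ≤ (ε / 2) * p N :=
        mul_le_mul_of_nonneg_right hNlarge (hpnn N)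
      have h4 := hlow.trans hsum1
      nlinarith
    refine le_of_mul_le_mul_left ?_ hKpos
    have hgoal : (K : ℝ) * ((1 - ε / (2 * K)) * p N) = (K : ℝ) * p N - (ε / 2) * p N := by
      field_simp
    rw [hgoal]
    linarith
  -- iterate the recursion
  have hr0 : 0 ≤ 1 - ε / (2 * K) := by
    have h1 : ε / (2 * K) ≤ 1 := by
      rw [div_le_one (by positivity)]
      linarith
    linarith
  have hr1 : 1 - ε / (2 * K) < 1 := by
    have : 0 < ε / (2 * K) := by positivity
    linarith
  have hiter : ∀ n : ℕ, p (N₀ + n * K) ≤ (1 - ε / (2 * K)) ^ n := by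
    intro n
    induction n with
    | zero => simpa using hple1 N₀
    | succ n ih =>
        have h1 : N₀ + (n + 1) * K = (N₀ + n * K) + K := by ring
        rw [h1, pow_succ]
        refine (hrec (N₀ + n * K) (Nat.le_add_right _ _)).trans ?_
        calc (1 - ε / (2 * K)) * p (N₀ + n * K)
            ≤ (1 - ε / (2 * K)) * (1 - ε / (2 * K)) ^ n :=
              mul_le_mul_of_nonneg_left ih hr0
          _ = (1 - ε / (2 * K)) ^ n * (1 - ε / (2 * K)) := by ring
  -- P(never visiting x) = 0
  have hInter : P (⋂ n, Bs n) = 0 := by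
    have hle : ∀ n : ℕ, (P (⋂ m, Bs m)).toReal ≤ (1 - ε / (2 * K)) ^ n := fun n =>
      (ENNReal.toReal_mono (measure_ne_top P _)
        (measure_mono (Set.iInter_subset _ (N₀ + n * K)))).trans (hiter n)
    have htend : Filter.Tendsto (fun n : ℕ => (1 - ε / (2 * K)) ^ n)
        Filter.atTop (nhds 0) := tendsto_pow_atTop_nhds_zero_of_lt_one hr0 hr1
    have h0 : (P (⋂ m, Bs m)).toReal ≤ 0 := ge_of_tendsto' htend hle
    have h0' : (P (⋂ m, Bs m)).toReal = 0 := le_antisymm h0 ENNReal.toReal_nonneg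
    rcases (ENNReal.toReal_eq_zero_iff _).mp h0' with h | h
    · exact h
    · exact absurd h (measure_ne_top P _)
  -- conclusion
  have hTmeas : MeasurableSet {ω | ∃ n : ℕ, 0 < L (n + 1) ω x} := by
    have hset : {ω | ∃ n : ℕ, 0 < L (n + 1) ω x}
        = ⋃ n : ℕ, {ω | 0 < L (n + 1) ω x} := by
      ext ω; simp
    rw [hset]
    refine MeasurableSet.iUnion fun n => ?_
    have hmeasL : Measurable fun ω => L (n + 1) ω x := by
      have hfun : (fun ω => L (n + 1) ω x) = fun ω => empOf n (vecb X n ω) x := by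
        funext ω
        rw [L_eq hchain]
      rw [hfun]
      exact (measurable_of_countable fun v => empOf n v x).comp (measurable_vecb hX n)
    exact measurableSet_lt measurable_const hmeasL
  rw [← prob_compl_eq_zero_iff hTmeas]
  refine le_antisymm ?_ zero_le
  rw [← hInter]
  refine measure_mono fun ω hω => ?_
  simp only [Set.mem_compl_iff, Set.mem_setOf_eq, not_exists, not_lt] at hω
  refine Set.mem_iInter.mpr fun n => ?_
  simp only [hBs, Set.mem_setOf_eq]
  intro i hi hXi
  have hposL : 0 < L (n + 1) ω x := by
    rw [hchain.emp n ω x]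
    refine div_pos ?_ (by positivity)
    have hsum := Finset.single_le_sum (f := fun t => if X t ω = x then (1 : ℝ) else 0)
      (fun t _ => by positivity) (Finset.mem_range.mpr (by omega : i < n + 1))
    simp only [hXi, if_true] at hsum
    linarith
  exact absurd (hω n) (not_le.mpr hposL)

end
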